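/- Let q be even, G = SL₂(q)·⟨ψ⟩ ≤ ΓL₂(q) with ψ a field automorphism, and let x ∈ G be an element of even order such that the coset SL₂(q)x has odd order t in G/SL₂(q). Then x^t is an involution of SL₂(q), and ⟨x⟩ is G-conjugate to a subgroup of ⟨z⟩ × ⟨ψ⟩_{2'}, where z is the transposition matrix [[0,1],[1,0]]. -/

import Mathlib

open Matrix

/-- The automorphism of `SL₂(F)` induced by a field automorphism `σ` (entrywise action). -/
def slConjAut (F : Type*) [Field F] (σ : F ≃+* F) :
    MulAut (Matrix.SpecialLinearGroup (Fin 2) F) where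
  toFun := Matrix.SpecialLinearGroup.map (σ : F →+* F)
  invFun := Matrix.SpecialLinearGroup.map (σ.symm : F →+* F)
  left_inv g := by ext i j; simp
  right_inv g := by ext i j; simp
  map_mul' := map_mul _

/-- The action of the Galois group (the group of field automorphisms of `F`) on `SL₂(F)`,
used to form `SL₂(q) ⋊ ⟨φ⟩ = SL₂(q).⟨φ⟩ ≤ ΓL₂(q)`. -/
def slGalAction (F : Type*) [Field F] :
    (F ≃+* F) →* MulAut (Matrix.SpecialLinearGroup (Fin 2) F) where
  toFun := slConjAut F
  map_one' := by
    ext g i j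
    rfl
  map_mul' σ τ := by
    ext g i j
    rfl

/-- The matrix `z = [[0,1],[1,0]]`, an involution in `SL₂(F)` when `char F = 2`. -/
def zmat (F : Type*) [Field F] [CharP F 2] : Matrix.SpecialLinearGroup (Fin 2) F :=
  ⟨!![0, 1; 1, 0], by simp [Matrix.det_fin_two_of, CharTwo.neg_eq]⟩

set_option linter.unusedSectionVars false
set_option linter.unusedVariables false

section Aux

variable {F : Type*} [Field F] [CharP F 2]

lemma aux_add_eq {a b : F} (h : a + b = 0) : a = b := by
  have h' : a = -b := eq_neg_of_add_eq_zero_left h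
  rwa [CharTwo.neg_eq] at h'

lemma aux_matAddSelf (X : Matrix (Fin 2) (Fin 2) F) : X + X = 0 := by
  ext i j; simp [CharTwo.add_self_eq_zero]

lemma aux_exists_sq [Finite F] (y : F) : ∃ p : F, p * p = y := by
  have h2 : (2:F) = 0 := by exact_mod_cast CharP.cast_eq_zero F 2
  have hinj : Function.Injective (fun p : F => p * p) := by
    intro a b h
    apply aux_add_eq
    have hsq : (a + b) * (a + b) = 0 := by linear_combination h + (a*b + b*b) * h2
    exact mul_self_eq_zero.mp hsq
  exact Finite.surjective_of_injective hinj y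

/-- Structure of a nonzero square-zero 2×2 matrix in char 2. -/
lemma aux_matM {M : Matrix (Fin 2) (Fin 2) F} (h0 : M * M = 0) (hne : M ≠ 0) :
    M 1 1 = M 0 0 ∧ M 0 0 * M 0 0 = M 0 1 * M 1 0 ∧ ¬(M 0 1 = 0 ∧ M 1 0 = 0) := by
  have h2 : (2:F) = 0 := by exact_mod_cast CharP.cast_eq_zero F 2
  have e := fun i j => congrFun (congrFun h0 i) j
  simp only [Matrix.mul_apply, Fin.sum_univ_two, Matrix.zero_apply] at e
  have e00 := e 0 0; have e11 := e 1 1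
  have hd : M 1 1 = M 0 0 := by
    have hsq : M 1 1 * M 1 1 = M 0 0 * M 0 0 := by
      apply aux_add_eq
      linear_combination e11 + e00 - M 0 1 * M 1 0 * h2
    apply aux_add_eq
    have h' : (M 1 1 + M 0 0) * (M 1 1 + M 0 0) = 0 := by
      linear_combination hsq + (M 1 1 * M 0 0 + M 0 0 * M 0 0) * h2
    exact mul_self_eq_zero.mp h'
  have hsq00 : M 0 0 * M 0 0 = M 0 1 * M 1 0 := aux_add_eq (by linear_combination e00)
  refine ⟨hd, hsq00, ?_⟩
  rintro ⟨hb, hc⟩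
  apply hne
  have ha : M 0 0 = 0 := by
    have h' : M 0 0 * M 0 0 = 0 := by rw [hsq00, hb, zero_mul]
    exact mul_self_eq_zero.mp h'
  ext i j
  fin_cases i <;> fin_cases j <;> simp [ha, hb, hc, hd]

/-- If `A` commutes with a nonzero square-zero `M`, then `A 1 1 = A 0 0` and a cross relation. -/
lemma aux_matKey {M A : Matrix (Fin 2) (Fin 2) F} (h0 : M * M = 0) (hne : M ≠ 0)
    (hAM : A * M = M * A) : A 1 1 = A 0 0 ∧ A 0 1 * M 1 0 = M 0 1 * A 1 0 := by
  have h2 : (2:F) = 0 := by exact_mod_cast CharP.cast_eq_zero F 2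
  obtain ⟨hd, hsq, hbc⟩ := aux_matM h0 hne
  have e := fun i j => congrFun (congrFun hAM i) j
  simp only [Matrix.mul_apply, Fin.sum_univ_two] at e
  have e00 := e 0 0; have e01 := e 0 1; have e10 := e 1 0
  refine ⟨?_, by linear_combination e00⟩
  rcases (not_and_or.mp hbc) with hb | hc
  · apply aux_add_eq
    have hz : M 0 1 * (A 1 1 + A 0 0) = 0 := by
      linear_combination -e01 + A 0 1 * hd + M 0 1 * A 0 0 * h2
    exact (mul_eq_zero.mp hz).resolve_left hb
  · apply aux_add_eq
    have hz : M 1 0 * (A 1 1 + A 0 0) = 0 := by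
      linear_combination e10 + A 1 0 * hd + M 1 0 * A 0 0 * h2
    exact (mul_eq_zero.mp hz).resolve_left hc

lemma aux_matCommute {M A B : Matrix (Fin 2) (Fin 2) F} (h0 : M * M = 0) (hne : M ≠ 0)
    (hAM : A * M = M * A) (hBM : B * M = M * B) : A * B = B * A := by
  obtain ⟨hdA, hcA⟩ := aux_matKey h0 hne hAM
  obtain ⟨hdB, hcB⟩ := aux_matKey h0 hne hBM
  obtain ⟨-, -, hbc⟩ := aux_matM h0 hne
  have key : A 0 1 * B 1 0 = A 1 0 * B 0 1 := by
    rcases (not_and_or.mp hbc) with hb | hc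
    · apply mul_left_cancel₀ hb
      linear_combination B 0 1 * hcA - A 0 1 * hcB
    · apply mul_left_cancel₀ hc
      linear_combination B 1 0 * hcA - A 1 0 * hcB
  ext i j
  fin_cases i <;> fin_cases j <;>
    simp only [Matrix.mul_apply, Fin.sum_univ_two, Fin.zero_eta, Fin.mk_one]
  · linear_combination key
  · linear_combination A 0 1 * hdB - B 0 1 * hdA
  · linear_combination B 1 0 * hdA - A 1 0 * hdB
  · linear_combination -key

lemma aux_matSqOne {A : Matrix (Fin 2) (Fin 2) F} (hdA : A 1 1 = A 0 0)
    (hdet : A.det = 1) : A * A = 1 := by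
  have h2 : (2:F) = 0 := by exact_mod_cast CharP.cast_eq_zero F 2
  rw [Matrix.det_fin_two] at hdet
  ext i j
  fin_cases i <;> fin_cases j <;>
    simp [Matrix.mul_apply, Fin.sum_univ_two, Matrix.one_fin_two]
  · linear_combination hdet - A 0 0 * hdA + A 0 1 * A 1 0 * h2
  · linear_combination A 0 1 * hdA + A 0 0 * A 0 1 * h2
  · linear_combination A 1 0 * hdA + A 0 0 * A 1 0 * h2
  · linear_combination hdet + A 1 1 * hdA + A 0 1 * A 1 0 * h2

/-- Any involution in SL₂(F), char F = 2, is conjugate to zmat. -/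
lemma aux_conj_to_zmat [Finite F] (b : Matrix.SpecialLinearGroup (Fin 2) F)
    (hb2 : b.val * b.val = 1) (hb1 : b ≠ 1) :
    ∃ Q : Matrix.SpecialLinearGroup (Fin 2) F, Q⁻¹ * b * Q = zmat F := by
  have h2 : (2:F) = 0 := by exact_mod_cast CharP.cast_eq_zero F 2
  set B := b.val with hB
  have hM0 : (B + 1) * (B + 1) = 0 := by
    have h' : (B + 1) * (B + 1) = (B*B + 1) + (B + B) := by noncomm_ring
    rw [h', hb2]; simp [aux_matAddSelf]
  have hMne : B + 1 ≠ 0 := by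
    intro h
    apply hb1
    apply Subtype.ext
    have h' := congrArg (fun X => X + (1:Matrix (Fin 2) (Fin 2) F)) h
    rw [add_assoc, aux_matAddSelf, add_zero, zero_add] at h'
    simpa using h'
  obtain ⟨hd, hsq, hbc⟩ := aux_matM hM0 hMne
  simp only [Matrix.add_apply, Matrix.one_apply, reduceIte, Fin.one_eq_zero_iff, Fin.zero_eq_one_iff,
    ne_eq, OfNat.ofNat_ne_one, one_ne_zero, if_false, if_true, add_zero] at hd hsq hbc
  have eB11 : B 1 1 = B 0 0 := by exact add_right_cancel hd
  by_cases hc : B 1 0 = 0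
  · have hb01 : B 0 1 ≠ 0 := by tauto
    have hB00 : B 0 0 = 1 := by
      have h' : (B 0 0 + 1) * (B 0 0 + 1) = 0 := by rw [hsq, hc, mul_zero]
      have h'' := mul_self_eq_zero.mp h'
      exact aux_add_eq h''
    obtain ⟨p, hp⟩ := aux_exists_sq (B 0 1)⁻¹
    have hdet : Matrix.det !![B 0 1 * p, 0; p, p] = 1 := by
      rw [Matrix.det_fin_two_of, mul_assoc, hp]
      simp [mul_inv_cancel₀ hb01]
    set Q : Matrix.SpecialLinearGroup (Fin 2) F := ⟨!![B 0 1 * p, 0; p, p], hdet⟩ with hQ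
    refine ⟨Q, ?_⟩
    have hcomm : b * Q = Q * zmat F := by
      apply Subtype.ext
      show B * Q.val = Q.val * (zmat F).val
      ext i j
      fin_cases i <;> fin_cases j <;>
        simp [hQ, Matrix.mul_apply, Fin.sum_univ_two, zmat]
      · linear_combination B 0 1 * p * hB00 + B 0 1 * p * h2
      · linear_combination B 0 1 * p * hc + p * eB11 + p * hB00
      · linear_combination p * eB11 + p * hB00
    rw [mul_assoc, hcomm, inv_mul_cancel_left]
  · obtain ⟨p, hp⟩ := aux_exists_sq (B 1 0)⁻¹
    have hdet : Matrix.det !![p, B 0 0 * p; 0, B 1 0 * p] = 1 := by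
      have h' : p * (B 1 0 * p) = B 1 0 * (p * p) := by ring
      rw [Matrix.det_fin_two_of, h', hp]
      simp [mul_inv_cancel₀ hc]
    set Q : Matrix.SpecialLinearGroup (Fin 2) F := ⟨!![p, B 0 0 * p; 0, B 1 0 * p], hdet⟩ with hQ
    refine ⟨Q, ?_⟩
    have hcomm : b * Q = Q * zmat F := by
      apply Subtype.ext
      show B * Q.val = Q.val * (zmat F).val
      ext i j
      fin_cases i <;> fin_cases j <;>
        simp [hQ, Matrix.mul_apply, Fin.sum_univ_two, zmat]
      · linear_combination p * hsq + (p * (B 0 1 * B 1 0) - p - p * B 0 0) * h2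
      · linear_combination B 1 0 * p * eB11 + B 1 0 * p * B 0 0 * h2
    rw [mul_assoc, hcomm, inv_mul_cancel_left]

end Aux

section Aux2

variable {F : Type*} [Field F] [CharP F 2]

lemma aux_zmat_sq : (zmat F).val * (zmat F).val = 1 := by
  ext i j
  fin_cases i <;> fin_cases j <;>
    simp [zmat, Matrix.mul_apply, Fin.sum_univ_two, Matrix.one_fin_two]

/-- `J = z + 1` is nonzero with square zero. -/
lemma aux_J_sq : ((zmat F).val + 1) * ((zmat F).val + 1) = 0 := by
  have h' : ((zmat F).val + 1) * ((zmat F).val + 1)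
      = ((zmat F).val * (zmat F).val + 1) + ((zmat F).val + (zmat F).val) := by noncomm_ring
  rw [h', aux_zmat_sq]; simp [aux_matAddSelf]

lemma aux_J_ne : ((zmat F).val + 1) ≠ 0 := by
  intro h
  have h' := congrFun (congrFun h 0) 0
  simp [zmat] at h'

/-- Elements of `SL₂` commuting with a fixed element `u` whose square is `1`, `u ≠ 1`:
they commute with each other. -/
lemma aux_zcomm {A B : Matrix.SpecialLinearGroup (Fin 2) F}
    (hA : A * zmat F = zmat F * A) (hB : B * zmat F = zmat F * B) : A * B = B * A := by
  apply Subtype.ext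
  show A.val * B.val = B.val * A.val
  have hA' : A.val * ((zmat F).val + 1) = ((zmat F).val + 1) * A.val := by
    have := congrArg Subtype.val hA
    simp only [Matrix.SpecialLinearGroup.coe_mul] at this
    rw [mul_add, add_mul, this, mul_one, one_mul]
  have hB' : B.val * ((zmat F).val + 1) = ((zmat F).val + 1) * B.val := by
    have := congrArg Subtype.val hB
    simp only [Matrix.SpecialLinearGroup.coe_mul] at this
    rw [mul_add, add_mul, this, mul_one, one_mul]
  exact aux_matCommute aux_J_sq aux_J_ne hA' hB'

lemma aux_zsq {A : Matrix.SpecialLinearGroup (Fin 2) F}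
    (hA : A * zmat F = zmat F * A) : A * A = 1 := by
  apply Subtype.ext
  show A.val * A.val = (1 : Matrix.SpecialLinearGroup (Fin 2) F).val
  have hA' : A.val * ((zmat F).val + 1) = ((zmat F).val + 1) * A.val := by
    have := congrArg Subtype.val hA
    simp only [Matrix.SpecialLinearGroup.coe_mul] at this
    rw [mul_add, add_mul, this, mul_one, one_mul]
  obtain ⟨hd, -⟩ := aux_matKey aux_J_sq aux_J_ne hA'
  rw [Matrix.SpecialLinearGroup.coe_one]
  exact aux_matSqOne hd A.property

/-- In SL₂(F), char 2, an element of positive even order is an involution. -/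
lemma aux_sl_invol (b : Matrix.SpecialLinearGroup (Fin 2) F)
    (heven : Even (orderOf b)) (hpos : 0 < orderOf b) :
    b * b = 1 ∧ orderOf b = 2 := by
  have h2 : (2:F) = 0 := by exact_mod_cast CharP.cast_eq_zero F 2
  set n := orderOf b with hn
  have h2n : 2 ∣ n := heven.two_dvd
  set u := b ^ (n / 2) with hu
  have hu1 : u ≠ 1 := pow_ne_one_of_lt_orderOf (by omega) (by omega)
  have huu : u * u = 1 := by
    have hhalf : n / 2 + n / 2 = n := by omega
    rw [hu, ← pow_add, hhalf, hn]
    exact pow_orderOf_eq_one b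
  have hM0 : (u.val + 1) * (u.val + 1) = 0 := by
    have huuv : u.val * u.val = 1 := by
      have := congrArg Subtype.val huu
      simpa [Matrix.SpecialLinearGroup.coe_mul] using this
    have h' : (u.val + 1) * (u.val + 1) = (u.val * u.val + 1) + (u.val + u.val) := by noncomm_ring
    rw [h', huuv]; simp [aux_matAddSelf]
  have hMne : u.val + 1 ≠ 0 := by
    intro h
    apply hu1
    apply Subtype.ext
    have h' := congrArg (fun X => X + (1:Matrix (Fin 2) (Fin 2) F)) h
    rw [add_assoc, aux_matAddSelf, add_zero, zero_add] at h'
    simpa using h'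
  have hbu : b * u = u * b := ((Commute.refl b).pow_right (n / 2))
  have hbM : b.val * (u.val + 1) = (u.val + 1) * b.val := by
    have := congrArg Subtype.val hbu
    simp only [Matrix.SpecialLinearGroup.coe_mul] at this
    rw [mul_add, add_mul, this, mul_one, one_mul]
  have hd := (aux_matKey hM0 hMne hbM).1
  have hbb : b * b = 1 := by
    apply Subtype.ext
    show b.val * b.val = (1 : Matrix.SpecialLinearGroup (Fin 2) F).val
    rw [Matrix.SpecialLinearGroup.coe_one]
    exact aux_matSqOne hd b.property
  refine ⟨hbb, ?_⟩
  have hdvd : orderOf b ∣ 2 := orderOf_dvd_of_pow_eq_one (by rw [sq]; exact hbb)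
  have hle := Nat.le_of_dvd (by norm_num) hdvd
  omega

end Aux2

section Aux3

variable {F : Type*} [Field F] [CharP F 2]

lemma aux_gal_fix (τ : F ≃+* F) : slGalAction F τ (zmat F) = zmat F := by
  apply Subtype.ext
  show ((τ : F →+* F).mapMatrix (zmat F).val : Matrix (Fin 2) (Fin 2) F) = (zmat F).val
  ext i j
  fin_cases i <;> fin_cases j <;> simp [zmat]

instance aux_finite_ringequiv [Finite F] : Finite (F ≃+* F) :=
  Finite.of_injective (RingEquiv.toEquiv : (F ≃+* F) → (F ≃ F))
    (fun a b h => by ext x; exact congrArg (fun e => e.toFun x) h)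

/-- An odd-order element of `⟨ψ⟩` lies in the 2'-Hall part `⟨ψ^(2^v)⟩`. -/
lemma aux_odd_part {Γ : Type*} [Group Γ] [Finite Γ] {ψ σ : Γ}
    (hσ : σ ∈ Subgroup.zpowers ψ) (hodd : Odd (orderOf σ)) :
    σ ∈ Subgroup.zpowers (ψ ^ 2 ^ (orderOf ψ).factorization 2) := by
  rw [← mem_powers_iff_mem_zpowers] at hσ
  obtain ⟨k, hk⟩ := hσ
  simp only at hk
  set t := orderOf σ with htdef
  set m := orderOf ψ with hmdef
  set v := m.factorization 2 with hv
  have hmdvd : m ∣ k * t := by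
    apply orderOf_dvd_of_pow_eq_one
    rw [pow_mul, hk]
    exact pow_orderOf_eq_one σ
  have h2v : (2:ℕ) ^ v ∣ m := Nat.ordProj_dvd m 2
  have hcop : Nat.Coprime (2 ^ v) t := by
    apply Nat.Coprime.pow_left
    exact hodd.coprime_two_left
  have hdvdk : (2:ℕ) ^ v ∣ k := hcop.dvd_of_dvd_mul_right (h2v.trans hmdvd)
  obtain ⟨k', hk'⟩ := hdvdk
  rw [← mem_powers_iff_mem_zpowers]
  exact ⟨k', by simp only; rw [← pow_mul, ← hk', hk]⟩

end Aux3
section Main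

open SemidirectProduct

theorem stmt_11 {F : Type*} [Field F] [Finite F] [CharP F 2] (ψ : F ≃+* F)
    (x : Matrix.SpecialLinearGroup (Fin 2) F ⋊[slGalAction F] (F ≃+* F))
    (G : Subgroup (Matrix.SpecialLinearGroup (Fin 2) F ⋊[slGalAction F] (F ≃+* F)))
    (hG : G = SemidirectProduct.inl.range ⊔ Subgroup.zpowers (SemidirectProduct.inr ψ))
    (hxG : x ∈ G) (hxeven : Even (orderOf x)) (hxpos : 0 < orderOf x)
    (t : ℕ) (ht : t = orderOf (SemidirectProduct.rightHom x)) (htodd : Odd t) :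
    (SemidirectProduct.rightHom (x ^ t) = 1 ∧ orderOf (x ^ t) = 2) ∧
    ∃ g ∈ G, ∀ y ∈ Subgroup.zpowers x,
      g⁻¹ * y * g ∈
        Subgroup.zpowers (SemidirectProduct.inl (zmat F)) ⊔
          Subgroup.zpowers (SemidirectProduct.inr (ψ ^ 2 ^ (orderOf ψ).factorization 2)) := by
  classical
  obtain ⟨s, hs⟩ := htodd
  have ht0 : t ≠ 0 := by omega
  set σ : F ≃+* F := SemidirectProduct.rightHom x with hσdef
  have hσt : σ ^ t = 1 := by rw [ht]; exact pow_orderOf_eq_one σ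
  have hrt1 : SemidirectProduct.rightHom (x ^ t) = 1 := by rw [map_pow]; exact hσt
  have hxtb : x ^ t = SemidirectProduct.inl ((x ^ t).left) := by
    have hr : (x ^ t).right = 1 := hrt1
    conv_lhs => rw [← SemidirectProduct.inl_left_mul_inr_right (x ^ t)]
    rw [hr, _root_.map_one, mul_one]
  set b := (x ^ t).left with hbdef
  have hob : orderOf (x ^ t) = orderOf b := by
    rw [hxtb]; exact orderOf_injective SemidirectProduct.inl SemidirectProduct.inl_injective b
  have horder : orderOf (x ^ t) = orderOf x / Nat.gcd (orderOf x) t := orderOf_pow' x ht0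
  have hgcd_dvd : Nat.gcd (orderOf x) t ∣ t := Nat.gcd_dvd_right _ _
  have hgcd_pos : 0 < Nat.gcd (orderOf x) t := Nat.gcd_pos_of_pos_left t hxpos
  have hpos_xt : 0 < orderOf (x ^ t) := by
    rw [horder]
    exact Nat.div_pos (Nat.le_of_dvd hxpos (Nat.gcd_dvd_left _ _)) hgcd_pos
  have heven_xt : Even (orderOf (x ^ t)) := by
    rw [horder]
    by_contra hodd'
    have hoddq : Odd (orderOf x / Nat.gcd (orderOf x) t) := Nat.not_even_iff_odd.mp hodd'
    have hoddg : Odd (Nat.gcd (orderOf x) t) := by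
      rcases Nat.even_or_odd (Nat.gcd (orderOf x) t) with he | ho
      · exfalso
        have h2t : 2 ∣ t := dvd_trans he.two_dvd hgcd_dvd
        omega
      · exact ho
    have hfact : orderOf x / Nat.gcd (orderOf x) t * Nat.gcd (orderOf x) t = orderOf x :=
      Nat.div_mul_cancel (Nat.gcd_dvd_left _ _)
    have : Odd (orderOf x) := hfact ▸ hoddq.mul hoddg
    exact (Nat.not_odd_iff_even.mpr hxeven) this
  obtain ⟨hbb, hb2⟩ := aux_sl_invol b (by rw [← hob]; exact heven_xt) (by rw [← hob]; exact hpos_xt)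
  have hbbv : b.val * b.val = 1 := by
    have h' := congrArg Subtype.val hbb
    simpa [Matrix.SpecialLinearGroup.coe_mul] using h'
  refine ⟨⟨hrt1, by rw [hob]; exact hb2⟩, ?_⟩
  -- Part 2
  have hb1 : b ≠ 1 := by intro h; rw [h, orderOf_one] at hb2; omega
  have hx2t : x ^ (2 * t) = 1 := by
    have h1 : x ^ (2 * t) = (x ^ t) ^ 2 := by rw [mul_comm, pow_mul]
    rw [h1, sq, hxtb, ← _root_.map_mul, hbb, _root_.map_one]
  obtain ⟨Q, hQz⟩ := aux_conj_to_zmat b hbbv hb1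
  set y := (SemidirectProduct.inl Q)⁻¹ * x * SemidirectProduct.inl Q with hyx
  have hyconj : ∀ n : ℕ, y ^ n = (SemidirectProduct.inl Q)⁻¹ * x ^ n * SemidirectProduct.inl Q := by
    intro n
    have h : y = (MulAut.conj (SemidirectProduct.inl Q)⁻¹) x := by
      simp [MulAut.conj_apply, hyx]
    rw [h, ← map_pow]
    simp [MulAut.conj_apply]
  have hyt : y ^ t = SemidirectProduct.inl (zmat F) := by
    rw [hyconj, hxtb, ← _root_.map_inv, ← _root_.map_mul, ← _root_.map_mul, hQz]
  have hy2t : y ^ (2 * t) = 1 := by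
    rw [hyconj, hx2t]; group
  set w := y ^ (t + 1) with hw
  have hwt : w ^ t = 1 := by
    rw [hw, ← pow_mul]
    have h' : (t + 1) * t = 2 * t * (s + 1) := by rw [hs]; ring
    rw [h', pow_mul, hy2t, one_pow]
  have hyr : SemidirectProduct.rightHom y = σ := by
    rw [hyx]
    simp only [_root_.map_mul, _root_.map_inv, rightHom_inl, one_mul, inv_one]
    rw [hσdef]
    rfl
  have hwrH : SemidirectProduct.rightHom w = σ := by
    rw [hw, map_pow, hyr, pow_succ, hσt, one_mul]
  have hwr : w.right = σ := hwrH
  have hyw : y = y ^ t * w := by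
    rw [hw, ← pow_add]
    have h' : t + (t + 1) = 2 * t + 1 := by omega
    rw [h', pow_succ, hy2t, one_mul]
  have hcy : ∀ i : ℕ, w ^ i * SemidirectProduct.inl (zmat F)
      = SemidirectProduct.inl (zmat F) * w ^ i := by
    intro i
    have h1 : w ^ i = y ^ ((t + 1) * i) := by rw [hw, ← pow_mul]
    rw [h1, ← hyt]
    exact ((Commute.refl y).pow_pow _ _).eq
  set d : ℕ → Matrix.SpecialLinearGroup (Fin 2) F := fun i => (w ^ i).left with hd
  have hdz : ∀ i, d i * zmat F = zmat F * d i := by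
    intro i
    have h1 := congrArg SemidirectProduct.left (hcy i)
    simp only [SemidirectProduct.mul_left, SemidirectProduct.left_inl,
      SemidirectProduct.right_inl, _root_.map_one, MulAut.one_apply, aux_gal_fix] at h1
    exact h1
  have hwleft : w.left = d 1 := by simp [hd, pow_one]
  have hrec : ∀ i, d (i + 1) = d 1 * slGalAction F σ (d i) := by
    intro i
    have h1 : w ^ (i + 1) = w * w ^ i := by rw [pow_succ']
    have h2 := congrArg SemidirectProduct.left h1
    simp only [SemidirectProduct.mul_left] at h2
    rw [hwr, hwleft] at h2
    exact h2
  have hd0 : d 0 = 1 := by simp [hd]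
  have hdt : d t = 1 := by simp [hd, hwt]
  have hd1sq : d 1 * d 1 = 1 := aux_zsq (hdz 1)
  have hd1inv : (d 1)⁻¹ = d 1 := inv_eq_of_mul_eq_one_right hd1sq
  set c : ℕ → Matrix.SpecialLinearGroup (Fin 2) F :=
    fun k => ((List.range k).map d).prod with hc
  have hcsucc : ∀ k, c (k + 1) = c k * d k := by
    intro k; simp [hc, List.range_succ]
  have hc0 : c 0 = 1 := by simp [hc]
  have hcz : ∀ k, c k * zmat F = zmat F * c k := by
    intro k
    induction k with
    | zero => rw [hc0, one_mul, mul_one]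
    | succ k ih => rw [hcsucc, mul_assoc, hdz k, ← mul_assoc, ih, mul_assoc]
  have hφd : ∀ i, slGalAction F σ (d i) = d 1 * d (i + 1) := by
    intro i; rw [hrec i, ← mul_assoc, hd1sq, one_mul]
  have hkey : ∀ k, slGalAction F σ (c k) = (d 1) ^ k * (c k * d k) := by
    intro k
    induction k with
    | zero => simp only [hc0, _root_.map_one, hd0, pow_zero, one_mul, mul_one]
    | succ k ih =>
      rw [hcsucc, _root_.map_mul, ih, hφd k]
      have h1 : d 1 * c k = c k * d 1 := aux_zcomm (hdz 1) (hcz k)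
      have h2 : d 1 * d k = d k * d 1 := aux_zcomm (hdz 1) (hdz k)
      have hX : (c k * d k) * d 1 = d 1 * (c k * d k) := by
        rw [mul_assoc, ← h2, ← mul_assoc, ← h1, mul_assoc]
      calc (d 1) ^ k * (c k * d k) * (d 1 * d (k + 1))
          = (d 1) ^ k * (((c k * d k) * d 1) * d (k + 1)) := by group
        _ = (d 1) ^ k * ((d 1 * (c k * d k)) * d (k + 1)) := by rw [hX]
        _ = (d 1) ^ (k + 1) * (c k * d k * d (k + 1)) := by rw [pow_succ]; group
  have hd1pow : d 1 ^ t = d 1 := by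
    have hsq' : d 1 ^ 2 = 1 := by rw [sq]; exact hd1sq
    rw [hs, pow_succ, pow_mul, hsq', one_pow, one_mul]
  have hfin : slGalAction F σ (c t) = d 1 * c t := by
    rw [hkey t, hdt, mul_one, hd1pow]
  have hcd1 : d 1 * c t = c t * d 1 := aux_zcomm (hdz 1) (hcz t)
  have hconjw : SemidirectProduct.inl (c t) * w * (SemidirectProduct.inl (c t))⁻¹
      = SemidirectProduct.inr σ := by
    rw [← _root_.map_inv]
    apply SemidirectProduct.ext
    · simp only [SemidirectProduct.mul_left, SemidirectProduct.left_inl,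
        SemidirectProduct.right_inl, SemidirectProduct.mul_right, SemidirectProduct.left_inr,
        _root_.map_one, MulAut.one_apply, one_mul, mul_one]
      rw [hwleft, hwr, _root_.map_inv, hfin]
      have hinv : d 1 * (c t)⁻¹ = (c t)⁻¹ * d 1 := by
        have hco : Commute (d 1) (c t) := hcd1
        exact hco.inv_right.eq
      rw [_root_.mul_inv_rev]
      calc c t * d 1 * ((c t)⁻¹ * (d 1)⁻¹)
          = c t * (d 1 * (c t)⁻¹) * (d 1)⁻¹ := by group
        _ = c t * ((c t)⁻¹ * d 1) * (d 1)⁻¹ := by rw [hinv]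
        _ = 1 := by group
    · simp only [SemidirectProduct.mul_right, SemidirectProduct.right_inl,
        SemidirectProduct.right_inr, one_mul, mul_one]
      exact hwr
  set g : Matrix.SpecialLinearGroup (Fin 2) F ⋊[slGalAction F] (F ≃+* F) :=
    SemidirectProduct.inl Q * (SemidirectProduct.inl (c t))⁻¹ with hg
  have hgG : g ∈ G := by
    rw [hg, hG]
    apply Subgroup.mul_mem
    · exact Subgroup.mem_sup_left ⟨Q, rfl⟩
    · exact Subgroup.inv_mem _ (Subgroup.mem_sup_left ⟨c t, rfl⟩)
  have hczc : c t * zmat F * (c t)⁻¹ = zmat F := by rw [hcz t]; group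
  have hxg : g⁻¹ * x * g = SemidirectProduct.inl (zmat F) * SemidirectProduct.inr σ := by
    have h1 : g⁻¹ * x * g
        = SemidirectProduct.inl (c t) * y * (SemidirectProduct.inl (c t))⁻¹ := by
      rw [hg, hyx]; group
    calc g⁻¹ * x * g
        = SemidirectProduct.inl (c t) * y * (SemidirectProduct.inl (c t))⁻¹ := h1
      _ = SemidirectProduct.inl (c t) * (SemidirectProduct.inl (zmat F) * w)
            * (SemidirectProduct.inl (c t))⁻¹ := by rw [hyw, hyt]
      _ = (SemidirectProduct.inl (c t) * SemidirectProduct.inl (zmat F)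
            * (SemidirectProduct.inl (c t))⁻¹)
          * (SemidirectProduct.inl (c t) * w * (SemidirectProduct.inl (c t))⁻¹) := by group
      _ = SemidirectProduct.inl (zmat F) * SemidirectProduct.inr σ := by
          rw [hconjw, ← _root_.map_inv, ← _root_.map_mul, ← _root_.map_mul, hczc]
  have hσG : σ ∈ Subgroup.zpowers ψ := by
    have hmem : SemidirectProduct.rightHom x ∈ Subgroup.map SemidirectProduct.rightHom G :=
      ⟨x, hxG, rfl⟩
    rw [hG, Subgroup.map_sup, MonoidHom.map_zpowers] at hmem
    have hbot : Subgroup.map SemidirectProduct.rightHom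
        (SemidirectProduct.inl.range
          : Subgroup (Matrix.SpecialLinearGroup (Fin 2) F ⋊[slGalAction F] (F ≃+* F))) = ⊥ := by
      rw [MonoidHom.map_range, SemidirectProduct.rightHom_comp_inl]
      exact MonoidHom.range_one
    rw [hbot, bot_sup_eq, SemidirectProduct.rightHom_inr] at hmem
    exact hmem
  have hσodd : Odd (orderOf σ) := by rw [← ht]; exact ⟨s, hs⟩
  have hσ2' := aux_odd_part hσG hσodd
  obtain ⟨jj, hjj⟩ := Subgroup.mem_zpowers_iff.mp hσ2'
  refine ⟨g, hgG, ?_⟩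
  intro yy hyy
  obtain ⟨j, rfl⟩ := Subgroup.mem_zpowers_iff.mp hyy
  have hconj : g⁻¹ * x ^ j * g = (g⁻¹ * x * g) ^ j := by
    have h : g⁻¹ * x * g = (MulAut.conj g⁻¹) x := by simp [MulAut.conj_apply]
    rw [h, ← map_zpow]
    simp [MulAut.conj_apply]
  rw [hconj, hxg]
  apply Subgroup.zpow_mem
  apply Subgroup.mul_mem
  · exact Subgroup.mem_sup_left (Subgroup.mem_zpowers _)
  · apply Subgroup.mem_sup_right
    exact Subgroup.mem_zpowers_iff.mpr ⟨jj, by rw [← map_zpow, hjj]⟩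

end Main
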